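/- Suppose ν is even, P = Pᵀ is entrywise nonnegative and row stochastic, C ∈ ℝ^{n×n} is symmetric negative definite, and −q_i Q ⪯ C for every i ∈ {1,…,N}. Then the mapping A_{ν/2,ν/2}(z) := (P^{ν/2} ⊗ I_n) x⋆((P^{ν/2} ⊗ I_n) z) is firmly nonexpansive in the (I_N ⊗ (−C))-norm: for all r, s ∈ ℝ^{Nn}, ‖A_{ν/2,ν/2}(r) − A_{ν/2,ν/2}(s)‖²_{I_N⊗(−C)} ≤ (r − s)ᵀ (I_N ⊗ (−C)) (A_{ν/2,ν/2}(r) − A_{ν/2,ν/2}(s)). (Proposition 1, statement 3.) -/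

import Mathlib

open Matrix Filter Topology Finset
open scoped Kronecker

noncomputable section

/-- Euclidean norm of a finitely-indexed real vector. -/
def eunorm {ι : Type*} [Fintype ι] (x : ι → ℝ) : ℝ := Real.sqrt (x ⬝ᵥ x)

/-- `S`-weighted norm `‖x‖_S = √(xᵀ S x)`. -/
def wnorm {ι : Type*} [Fintype ι] (S : Matrix ι ι ℝ) (x : ι → ℝ) : ℝ :=
  Real.sqrt (x ⬝ᵥ S.mulVec x)

/-- Quadratic cost `J(x,z) = q·xᵀQx + 2(Cz+c)ᵀx`. -/
def cost {n : ℕ} (Q C : Matrix (Fin n) (Fin n) ℝ) (qi : ℝ) (ci : Fin n → ℝ)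
    (x z : Fin n → ℝ) : ℝ :=
  qi * (x ⬝ᵥ Q.mulVec x) + 2 * ((C.mulVec z + ci) ⬝ᵥ x)

/-- `xst` is the optimal-response map: for every `z`, `xst z` minimizes the cost over `X`. -/
def IsOptResp {n : ℕ} (X : Set (Fin n → ℝ)) (Q C : Matrix (Fin n) (Fin n) ℝ)
    (qi : ℝ) (ci : Fin n → ℝ) (xst : (Fin n → ℝ) → (Fin n → ℝ)) : Prop :=
  ∀ z, xst z ∈ X ∧ ∀ y ∈ X, cost Q C qi ci (xst z) z ≤ cost Q C qi ci y z

/-- Stacked optimal responses `x⋆(z) = (x^{1⋆}(z^1);…;x^{N⋆}(z^N))`. -/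
def extMap {n N : ℕ} (xstar : Fin N → (Fin n → ℝ) → (Fin n → ℝ))
    (z : Fin N × Fin n → ℝ) : Fin N × Fin n → ℝ :=
  fun p => xstar p.1 (fun j => z (p.1, j)) p.2

/-- Extended aggregation map `A_ν(z) = (P^ν ⊗ I_n) x⋆(z)`. -/
def aggMap {n N : ℕ} (P : Matrix (Fin N) (Fin N) ℝ) (ν : ℕ)
    (xstar : Fin N → (Fin n → ℝ) → (Fin n → ℝ)) (z : Fin N × Fin n → ℝ) :
    Fin N × Fin n → ℝ :=
  ((P ^ ν) ⊗ₖ (1 : Matrix (Fin n) (Fin n) ℝ)).mulVec (extMap xstar z)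

/-- The matrix `(1/N)·1_N 1_Nᵀ` with all entries `1/N`. -/
def avgMat (N : ℕ) : Matrix (Fin N) (Fin N) ℝ := Matrix.of fun _ _ => (N : ℝ)⁻¹

/-- Mean-field aggregation map `A(z) = ((1/N)·1 1ᵀ ⊗ I_n) x⋆(z)`. -/
def meanAgg {n N : ℕ} (xstar : Fin N → (Fin n → ℝ) → (Fin n → ℝ))
    (z : Fin N × Fin n → ℝ) : Fin N × Fin n → ℝ :=
  ((avgMat N) ⊗ₖ (1 : Matrix (Fin n) (Fin n) ℝ)).mulVec (extMap xstar z)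

/-- Maximum-row-sum matrix norm `‖A‖_∞`. -/
def rowSumNorm {N : ℕ} (A : Matrix (Fin N) (Fin N) ℝ) : ℝ := ⨆ i, ∑ j, |A i j|

/-- Spectral norm (ℓ²-operator norm) of a real matrix. -/
def specNorm {ι : Type*} [Fintype ι] [DecidableEq ι] (P : Matrix ι ι ℝ) : ℝ :=
  ‖LinearMap.toContinuousLinearMap (Matrix.toEuclideanLin P)‖

/-- Map `A_{m,m}(z) = (P^m ⊗ I_n) x⋆((P^m ⊗ I_n) z)`. -/
def halfAgg {n N : ℕ} (P : Matrix (Fin N) (Fin N) ℝ) (m : ℕ)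
    (xstar : Fin N → (Fin n → ℝ) → (Fin n → ℝ)) (z : Fin N × Fin n → ℝ) :
    Fin N × Fin n → ℝ :=
  ((P ^ m) ⊗ₖ (1 : Matrix (Fin n) (Fin n) ℝ)).mulVec
    (extMap xstar (((P ^ m) ⊗ₖ (1 : Matrix (Fin n) (Fin n) ℝ)).mulVec z))


lemma dot_symm {ι : Type*} [Fintype ι] {A : Matrix ι ι ℝ} (h : Aᵀ = A) (u v : ι → ℝ) :
    u ⬝ᵥ A.mulVec v = v ⬝ᵥ A.mulVec u := by
  rw [dotProduct_mulVec, dotProduct_comm, ← mulVec_transpose, h]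

lemma dot_move {ι : Type*} [Fintype ι] {A : Matrix ι ι ℝ} (h : Aᵀ = A) (u v : ι → ℝ) :
    (A.mulVec u) ⬝ᵥ v = u ⬝ᵥ A.mulVec v := by
  rw [dotProduct_comm, dot_symm h]

lemma quad_nonneg {ι : Type*} [Fintype ι] {A : Matrix ι ι ℝ} (hA : A.PosSemidef)
    (v : ι → ℝ) : 0 ≤ v ⬝ᵥ A.mulVec v := by
  simpa using hA.dotProduct_mulVec_nonneg v

lemma kron_psd {ι κ : Type*} [Fintype ι] [Fintype κ] [DecidableEq ι] [DecidableEq κ]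
    {A : Matrix ι ι ℝ} {B : Matrix κ κ ℝ} (hA : A.PosSemidef) (hB : B.PosSemidef) :
    (A ⊗ₖ B).PosSemidef := by
  exact hA.kronecker hB

lemma one_kron_mulVec {N n : ℕ} (B : Matrix (Fin n) (Fin n) ℝ) (v : Fin N × Fin n → ℝ)
    (p : Fin N × Fin n) :
    ((1 : Matrix (Fin N) (Fin N) ℝ) ⊗ₖ B).mulVec v p
      = B.mulVec (fun k => v (p.1, k)) p.2 := by
  simp [Matrix.mulVec, dotProduct, Fintype.sum_prod_type, Matrix.one_apply,
    ite_mul, Finset.mul_sum]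

lemma quad_block {N n : ℕ} (B : Matrix (Fin n) (Fin n) ℝ) (u v : Fin N × Fin n → ℝ) :
    u ⬝ᵥ ((1 : Matrix (Fin N) (Fin N) ℝ) ⊗ₖ B).mulVec v
      = ∑ i, (fun k => u (i, k)) ⬝ᵥ B.mulVec (fun k => v (i, k)) := by
  simp only [dotProduct, Fintype.sum_prod_type]
  refine Finset.sum_congr rfl fun i _ => Finset.sum_congr rfl fun k _ => ?_
  rw [one_kron_mulVec]

lemma contraction {N : ℕ} (P : Matrix (Fin N) (Fin N) ℝ) (hPnn : ∀ i j, 0 ≤ P i j)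
    (hPrs : ∀ i, ∑ j, P i j = 1) (hPsym : P.IsSymm) (x : Fin N → ℝ) :
    (P.mulVec x) ⬝ᵥ (P.mulVec x) ≤ x ⬝ᵥ x := by
  have key : ∀ i, (P.mulVec x i) * (P.mulVec x i) ≤ ∑ j, P i j * (x j * x j) := by
    intro i
    have h := Finset.sum_mul_sq_le_sq_mul_sq Finset.univ
      (fun j => Real.sqrt (P i j)) (fun j => Real.sqrt (P i j) * x j)
    have e1 : ∀ j, Real.sqrt (P i j) * (Real.sqrt (P i j) * x j) = P i j * x j := by
      intro j; rw [← mul_assoc, Real.mul_self_sqrt (hPnn i j)]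
    have e2 : ∀ j, Real.sqrt (P i j) ^ 2 = P i j := fun j => Real.sq_sqrt (hPnn i j)
    have e3 : ∀ j, (Real.sqrt (P i j) * x j) ^ 2 = P i j * (x j * x j) := by
      intro j; rw [mul_pow, e2]; ring
    simp only [e1, e2, e3] at h
    rw [hPrs i, one_mul] at h
    calc P.mulVec x i * P.mulVec x i = (∑ j, P i j * x j) ^ 2 := by
          simp [Matrix.mulVec, dotProduct, sq]
      _ ≤ ∑ j, P i j * (x j * x j) := h
  calc (P.mulVec x) ⬝ᵥ (P.mulVec x) ≤ ∑ i, ∑ j, P i j * (x j * x j) :=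
        Finset.sum_le_sum fun i _ => key i
    _ = ∑ j, (∑ i, P i j) * (x j * x j) := by
        rw [Finset.sum_comm]; simp [Finset.sum_mul]
    _ = x ⬝ᵥ x := by
        have hcol : ∀ j, (∑ i, P i j) = 1 := by
          intro j
          calc ∑ i, P i j = ∑ i, P j i :=
                Finset.sum_congr rfl fun i _ => hPsym.apply j i
            _ = 1 := hPrs j
        simp only [hcol, one_mul]
        rfl

lemma contraction_pow {N : ℕ} (P : Matrix (Fin N) (Fin N) ℝ) (hPnn : ∀ i j, 0 ≤ P i j)
    (hPrs : ∀ i, ∑ j, P i j = 1) (hPsym : P.IsSymm) (m : ℕ) (x : Fin N → ℝ) :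
    ((P ^ m).mulVec x) ⬝ᵥ ((P ^ m).mulVec x) ≤ x ⬝ᵥ x := by
  induction m with
  | zero => simp [Matrix.one_mulVec]
  | succ k ih =>
      have h1 : (P ^ (k + 1)).mulVec x = P.mulVec ((P ^ k).mulVec x) := by
        rw [pow_succ', Matrix.mulVec_mulVec]
      rw [h1]
      exact le_trans (contraction P hPnn hPrs hPsym _) ih

section AuxFNE

lemma vi_ineq {n : ℕ} {X : Set (Fin n → ℝ)} (hXconv : Convex ℝ X)
    {Q C : Matrix (Fin n) (Fin n) ℝ} (hQsym : Qᵀ = Q) {qi : ℝ} {ci : Fin n → ℝ}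
    {xst : (Fin n → ℝ) → (Fin n → ℝ)} (h : IsOptResp X Q C qi ci xst)
    (z y : Fin n → ℝ) (hy : y ∈ X) :
    0 ≤ qi * ((xst z) ⬝ᵥ Q.mulVec (y - xst z)) + (C.mulVec z + ci) ⬝ᵥ (y - xst z) := by
  set x := xst z with hxdef
  set d : Fin n → ℝ := y - x with hddef
  set b : ℝ := qi * (x ⬝ᵥ Q.mulVec d) + (C.mulVec z + ci) ⬝ᵥ d with hbdef
  set a : ℝ := qi * (d ⬝ᵥ Q.mulVec d) with hadef
  have hdx : d ⬝ᵥ Q.mulVec x = x ⬝ᵥ Q.mulVec d := dot_symm hQsym d x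
  have key : ∀ t : ℝ, t ∈ Set.Ioc (0:ℝ) 1 → 0 ≤ 2 * b + t * a := by
    intro t ht
    have hmem : x + t • d ∈ X := by
      have hcv := hXconv (h z).1 hy (by linarith [ht.2] : (0:ℝ) ≤ 1 - t) ht.1.le
        (by ring : (1 - t) + t = 1)
      convert hcv using 1
      rw [hddef]
      module
    have hle := (h z).2 _ hmem
    have expand : cost Q C qi ci (x + t • d) z
        = cost Q C qi ci x z + t * (2 * b) + t ^ 2 * a := by
      simp only [cost, hbdef, hadef, Matrix.mulVec_add, Matrix.mulVec_smul,
        dotProduct_add, add_dotProduct, dotProduct_smul, smul_dotProduct, smul_eq_mul]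
      linear_combination (qi * t) * hdx
    rw [expand] at hle
    nlinarith [ht.1]
  have hlim : Tendsto (fun t : ℝ => 2 * b + t * a) (𝓝[>] (0:ℝ)) (𝓝 (2 * b)) := by
    have hc : Continuous fun t : ℝ => 2 * b + t * a := by continuity
    simpa using (hc.tendsto 0).mono_left nhdsWithin_le_nhds
  have hev : ∀ᶠ t in 𝓝[>] (0:ℝ), 0 ≤ 2 * b + t * a :=
    Filter.eventually_of_mem (Ioc_mem_nhdsGT_of_mem (by constructor <;> norm_num)) key
  have h2b : 0 ≤ 2 * b := ge_of_tendsto hlim hev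
  linarith

lemma block_fne {n : ℕ} {X : Set (Fin n → ℝ)} (hXconv : Convex ℝ X)
    {Q C : Matrix (Fin n) (Fin n) ℝ} (hQsym : Qᵀ = Q) (hCsym : Cᵀ = C)
    {qi : ℝ} {ci : Fin n → ℝ} (hqQC : (qi • Q + C).PosSemidef)
    {xst : (Fin n → ℝ) → (Fin n → ℝ)} (h : IsOptResp X Q C qi ci xst)
    (z z' : Fin n → ℝ) :
    (xst z - xst z') ⬝ᵥ (-C).mulVec (xst z - xst z')
      ≤ (z - z') ⬝ᵥ (-C).mulVec (xst z - xst z') := by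
  have hnCsym : (-C)ᵀ = -C := by rw [Matrix.transpose_neg, hCsym]
  set x := xst z with hx
  set x' := xst z' with hx'
  have h1 := vi_ineq hXconv hQsym h z x' (h z').1
  have h2 := vi_ineq hXconv hQsym h z' x (h z).1
  simp only [← hx, ← hx'] at h1 h2
  set Δ : Fin n → ℝ := x - x' with hΔ
  have hpsd := quad_nonneg hqQC Δ
  have hpsd' : 0 ≤ qi * (Δ ⬝ᵥ Q.mulVec Δ) + Δ ⬝ᵥ C.mulVec Δ := by
    simpa [Matrix.add_mulVec, Matrix.smul_mulVec, dotProduct_add,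
      dotProduct_smul, smul_eq_mul] using hpsd
  have he1 : x' - x = -Δ := by rw [hΔ]; abel
  rw [he1] at h1
  -- expand h1, h2
  have h1' : qi * (x ⬝ᵥ Q.mulVec Δ) + C.mulVec z ⬝ᵥ Δ + ci ⬝ᵥ Δ ≤ 0 := by
    have := h1
    simp only [Matrix.mulVec_neg, dotProduct_neg, neg_dotProduct, add_dotProduct] at this
    linarith
  have h2' : 0 ≤ qi * (x' ⬝ᵥ Q.mulVec Δ) + C.mulVec z' ⬝ᵥ Δ + ci ⬝ᵥ Δ := by
    have := h2
    simp only [add_dotProduct] at this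
    linarith
  -- x'⬝QΔ - x⬝QΔ = -(Δ⬝QΔ)
  have hquad : x' ⬝ᵥ Q.mulVec Δ - x ⬝ᵥ Q.mulVec Δ = -(Δ ⬝ᵥ Q.mulVec Δ) := by
    rw [hΔ]
    simp only [sub_dotProduct]
    ring
  -- relate C-terms to goal's RHS
  have hCz : C.mulVec z' ⬝ᵥ Δ - C.mulVec z ⬝ᵥ Δ = (z - z') ⬝ᵥ (-C).mulVec Δ := by
    have hmv : (-C).mulVec (z - z') = C.mulVec z' - C.mulVec z := by
      rw [Matrix.neg_mulVec, Matrix.mulVec_sub]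
      abel
    have := dot_move hnCsym (z - z') Δ
    rw [hmv] at this
    rw [← this, sub_dotProduct]
  have hgoal_lhs : Δ ⬝ᵥ (-C).mulVec Δ = -(Δ ⬝ᵥ C.mulVec Δ) := by
    rw [Matrix.neg_mulVec, dotProduct_neg]
  have hq2 : qi * (x' ⬝ᵥ Q.mulVec Δ) - qi * (x ⬝ᵥ Q.mulVec Δ)
      = -(qi * (Δ ⬝ᵥ Q.mulVec Δ)) := by linear_combination qi * hquad
  rw [hgoal_lhs]
  linarith

end AuxFNE

/-- Proposition 1, statement 3: if `ν` is even, `P = Pᵀ` row stochastic,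
`C` symmetric negative definite and `−q_i Q ⪯ C` for all `i`, then `A_{ν/2,ν/2}` is
firmly nonexpansive in the `(I_N ⊗ (−C))`-norm. -/
theorem halfAgg_firmlyNonexpansive {n N ν : ℕ} (hn : 0 < n) (hN : 0 < N) (hν : 0 < ν)
    (hνeven : Even ν)
    (X : Fin N → Set (Fin n → ℝ))
    (hXne : ∀ i, (X i).Nonempty) (hXconv : ∀ i, Convex ℝ (X i))
    (hXcpt : ∀ i, IsCompact (X i))
    (Q C : Matrix (Fin n) (Fin n) ℝ) (hQ : Q.PosDef)
    (q : Fin N → ℝ) (hq : ∀ i, 0 < q i) (c : Fin N → Fin n → ℝ)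
    (P : Matrix (Fin N) (Fin N) ℝ) (hPnn : ∀ i j, 0 ≤ P i j)
    (hPrs : ∀ i, ∑ j, P i j = 1) (hPsym : P.IsSymm)
    (hC : (-C).PosDef) (hqQC : ∀ i, (q i • Q + C).PosSemidef)
    (xstar : Fin N → (Fin n → ℝ) → (Fin n → ℝ))
    (hxstar : ∀ i, IsOptResp (X i) Q C (q i) (c i) (xstar i)) :
    ∀ r s : Fin N × Fin n → ℝ,
      wnorm ((1 : Matrix (Fin N) (Fin N) ℝ) ⊗ₖ (-C))
          (halfAgg P (ν / 2) xstar r - halfAgg P (ν / 2) xstar s) ^ 2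
        ≤ (r - s) ⬝ᵥ (((1 : Matrix (Fin N) (Fin N) ℝ) ⊗ₖ (-C)).mulVec
            (halfAgg P (ν / 2) xstar r - halfAgg P (ν / 2) xstar s)) := by
  intro r s
  set m := ν / 2 with hm
  set K : Matrix (Fin N × Fin n) (Fin N × Fin n) ℝ :=
    (P ^ m) ⊗ₖ (1 : Matrix (Fin n) (Fin n) ℝ) with hK
  set S : Matrix (Fin N × Fin n) (Fin N × Fin n) ℝ :=
    (1 : Matrix (Fin N) (Fin N) ℝ) ⊗ₖ (-C) with hS
  have hCsym : Cᵀ = C := by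
    have h1 : (-C)ᵀ = -C := by
      have := hC.1
      rwa [Matrix.IsHermitian, Matrix.conjTranspose_eq_transpose_of_trivial] at this
    rw [Matrix.transpose_neg] at h1
    exact neg_injective h1
  have hQsym : Qᵀ = Q := by
    have := hQ.1
    rwa [Matrix.IsHermitian, Matrix.conjTranspose_eq_transpose_of_trivial] at this
  have hPm : (P ^ m)ᵀ = P ^ m := by rw [Matrix.transpose_pow, hPsym]
  have hKsym : Kᵀ = K := by
    rw [hK, ← Matrix.kroneckerMap_transpose, Matrix.transpose_one, hPm]
  have hSK : S * K = (P ^ m) ⊗ₖ (-C) := by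
    rw [hS, hK, ← Matrix.mul_kronecker_mul, one_mul, mul_one]
  have hKS : K * S = (P ^ m) ⊗ₖ (-C) := by
    rw [hS, hK, ← Matrix.mul_kronecker_mul, one_mul, mul_one]
  set a : Fin N × Fin n → ℝ := K.mulVec r with ha
  set b : Fin N × Fin n → ℝ := K.mulVec s with hb
  set Δ : Fin N × Fin n → ℝ := extMap xstar a - extMap xstar b with hΔ
  have hdiff : halfAgg P m xstar r - halfAgg P m xstar s = K.mulVec Δ := by
    rw [hΔ, Matrix.mulVec_sub]
    rfl
  rw [hdiff]
  set w : Fin N × Fin n → ℝ := K.mulVec Δ with hw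
  have hSpsd : S.PosSemidef := kron_psd Matrix.PosSemidef.one hC.posSemidef
  have hstep1 : wnorm S w ^ 2 = w ⬝ᵥ S.mulVec w := by
    rw [wnorm, Real.sq_sqrt (quad_nonneg hSpsd w)]
  have hstep2 : w ⬝ᵥ S.mulVec w = Δ ⬝ᵥ ((P ^ m * P ^ m) ⊗ₖ (-C)).mulVec Δ := by
    have e : ((P ^ m * P ^ m) ⊗ₖ (-C)) = K * (S * K) := by
      rw [hSK, hK, ← Matrix.mul_kronecker_mul, one_mul]
    calc w ⬝ᵥ S.mulVec w = (K.mulVec Δ) ⬝ᵥ S.mulVec w := by rw [← hw]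
      _ = Δ ⬝ᵥ K.mulVec (S.mulVec w) := dot_move hKsym Δ _
      _ = Δ ⬝ᵥ (K * (S * K)).mulVec Δ := by
          rw [hw, Matrix.mulVec_mulVec, Matrix.mulVec_mulVec, mul_assoc]
      _ = Δ ⬝ᵥ ((P ^ m * P ^ m) ⊗ₖ (-C)).mulVec Δ := by rw [e]
  have hcontr : Δ ⬝ᵥ ((P ^ m * P ^ m) ⊗ₖ (-C)).mulVec Δ ≤ Δ ⬝ᵥ S.mulVec Δ := by
    have hpsd2 : ((1 : Matrix (Fin N) (Fin N) ℝ) - P ^ m * P ^ m).PosSemidef := by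
      refine Matrix.PosSemidef.of_dotProduct_mulVec_nonneg ?_ ?_
      · rw [Matrix.IsHermitian, Matrix.conjTranspose_eq_transpose_of_trivial,
          Matrix.transpose_sub, Matrix.transpose_one, Matrix.transpose_mul, hPm]
      · intro x
        simp only [star_trivial]
        have hx2 : x ⬝ᵥ (P ^ m * P ^ m).mulVec x
            = ((P ^ m).mulVec x) ⬝ᵥ ((P ^ m).mulVec x) := by
          rw [← Matrix.mulVec_mulVec, ← dot_move hPm]
        rw [Matrix.sub_mulVec, dotProduct_sub, Matrix.one_mulVec, hx2]
        have := contraction_pow P hPnn hPrs hPsym m x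
        linarith
    have hkron := kron_psd hpsd2 hC.posSemidef
    have hq := quad_nonneg hkron Δ
    have esub : ((1 : Matrix (Fin N) (Fin N) ℝ) - P ^ m * P ^ m) ⊗ₖ (-C)
        = S - (P ^ m * P ^ m) ⊗ₖ (-C) := by
      rw [hS]
      ext ⟨i, k⟩ ⟨j, l⟩
      simp [Matrix.sub_apply]
      ring
    rw [esub, Matrix.sub_mulVec, dotProduct_sub] at hq
    linarith
  have hfne : Δ ⬝ᵥ S.mulVec Δ ≤ (a - b) ⬝ᵥ S.mulVec Δ := by
    rw [hS, quad_block, quad_block]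
    refine Finset.sum_le_sum fun i _ => ?_
    have hΔi : (fun k => Δ (i, k))
        = xstar i (fun j => a (i, j)) - xstar i (fun j => b (i, j)) := by
      funext k
      simp [hΔ, extMap]
    have habi : (fun k => (a - b) (i, k))
        = (fun j => a (i, j)) - (fun j => b (i, j)) := by
      funext k
      simp
    rw [hΔi, habi]
    exact block_fne (hXconv i) hQsym hCsym (hqQC i) (hxstar i) _ _
  have hmove : (a - b) ⬝ᵥ S.mulVec Δ = (r - s) ⬝ᵥ S.mulVec w := by
    have hab : a - b = K.mulVec (r - s) := by rw [ha, hb, Matrix.mulVec_sub]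
    calc (a - b) ⬝ᵥ S.mulVec Δ = (K.mulVec (r - s)) ⬝ᵥ S.mulVec Δ := by rw [hab]
      _ = (r - s) ⬝ᵥ K.mulVec (S.mulVec Δ) := dot_move hKsym _ _
      _ = (r - s) ⬝ᵥ (K * S).mulVec Δ := by rw [Matrix.mulVec_mulVec]
      _ = (r - s) ⬝ᵥ (S * K).mulVec Δ := by rw [hKS, hSK]
      _ = (r - s) ⬝ᵥ S.mulVec w := by rw [hw, ← Matrix.mulVec_mulVec]
  rw [hstep1, hstep2]
  calc Δ ⬝ᵥ ((P ^ m * P ^ m) ⊗ₖ (-C)).mulVec Δ ≤ Δ ⬝ᵥ S.mulVec Δ := hcontr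
    _ ≤ (a - b) ⬝ᵥ S.mulVec Δ := hfne
    _ = (r - s) ⬝ᵥ S.mulVec w := hmove
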